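/- Suppose a sequence w(t) in a normed space satisfies ‖w(t+1) - w*‖ ≤ (1 - Cα + αbρᵗ)‖w(t) - w*‖ + αbRρᵗ for all t ≥ 0, with constants C, α, b, R > 0, ρ ∈ (0,1), 1 - Cα ∈ (0,1), and 1 - Cα ≠ ρ. Then for all t ≥ 0, ‖w(t+1) - w*‖ ≤ V_α(1-Cα)^{t+1}‖w(0) - w*‖ + (αbRV_α(1-Cα)/(1-Cα-ρ))((1-Cα)ᵗ - ρᵗ) + αbRρᵗ, where V_α = ∏_{j=0}^∞ (1 + αbρʲ/(1-Cα)). -/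

import Mathlib

set_option maxHeartbeats 1000000 in
theorem stmt_14 {X : Type*} [NormedAddCommGroup X] [NormedSpace ℝ X]
    (w : ℕ → X) (wstar : X) (C α b R ρ : ℝ)
    (hC : 0 < C) (hα : 0 < α) (hb : 0 < b) (hR : 0 < R)
    (hρ : ρ ∈ Set.Ioo (0 : ℝ) 1)
    (h1 : 0 < 1 - C * α) (h2 : 1 - C * α < 1) (h3 : 1 - C * α ≠ ρ)
    (hrec : ∀ t : ℕ, ‖w (t + 1) - wstar‖ ≤
      (1 - C * α + α * b * ρ ^ t) * ‖w t - wstar‖ + α * b * R * ρ ^ t) :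
    ∀ t : ℕ, ‖w (t + 1) - wstar‖ ≤
      (∏' j : ℕ, (1 + α * b * ρ ^ j / (1 - C * α))) * (1 - C * α) ^ (t + 1) *
          ‖w 0 - wstar‖ +
        (α * b * R * (∏' j : ℕ, (1 + α * b * ρ ^ j / (1 - C * α))) * (1 - C * α) /
            (1 - C * α - ρ)) * ((1 - C * α) ^ t - ρ ^ t) +
        α * b * R * ρ ^ t := by
  obtain ⟨hρ0, hρ1⟩ := hρ
  set q : ℝ := 1 - C * α with hqdef
  set c : ℝ := α * b with hcdef
  have hc0 : 0 < c := mul_pos hα hb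
  set f : ℕ → ℝ := fun j => 1 + c * ρ ^ j / q with hfdef
  have hf1 : ∀ j, 1 ≤ f j := fun j =>
    le_add_of_nonneg_right (by positivity)
  have hfpos : ∀ j, 0 < f j := fun j => lt_of_lt_of_le one_pos (hf1 j)
  have hmul : Multipliable f := by
    have := Real.multipliable_of_summable_log (f := f)
      (fun j => hfpos j) ?_
    · exact this
    · show Summable fun j => Real.log (f j)
      apply Summable.of_nonneg_of_le (fun j => Real.log_nonneg (hf1 j))
        (fun j => ?_)
        ((summable_geometric_of_lt_one hρ0.le hρ1).mul_left (c / q))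
      calc Real.log (f j) ≤ f j - 1 := Real.log_le_sub_one_of_pos (hfpos j)
        _ = c / q * ρ ^ j := by simp [hfdef]; ring
  set V : ℝ := ∏' j, f j with hVdef
  clear_value V
  clear_value f
  clear_value q c
  have hone : ∀ s : Finset ℕ, (1 : ℝ) ≤ ∏ j ∈ s, f j := by
    intro s
    calc (1 : ℝ) = ∏ _j ∈ s, (1 : ℝ) := Finset.prod_const_one.symm
      _ ≤ ∏ j ∈ s, f j :=
        Finset.prod_le_prod (fun i _ => zero_le_one) (fun i _ => hf1 i)
  have hVf : ∀ s : Finset ℕ, ∏ j ∈ s, f j ≤ V := by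
    intro s
    refine ge_of_tendsto (hVdef ▸ hmul.hasProd) ?_
    refine Filter.eventually_atTop.2 ⟨s, fun t hst => ?_⟩
    rw [← Finset.prod_sdiff hst]
    have h1' := hone (t \ s)
    have h2' : (0 : ℝ) ≤ ∏ j ∈ s, f j := le_trans zero_le_one (hone s)
    exact le_mul_of_one_le_left h2' h1'
  have hV1 : (1 : ℝ) ≤ V := by simpa using hVf ∅
  have hqne : q ≠ 0 := ne_of_gt h1
  have hne : q - ρ ≠ 0 := sub_ne_zero.mpr h3
  have key : ∀ t : ℕ, ‖w (t + 1) - wstar‖ ≤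
      (∏ j ∈ Finset.range (t + 1), f j) * q ^ (t + 1) * ‖w 0 - wstar‖ +
        c * R * (∑ s ∈ Finset.range t,
          ρ ^ s * q ^ (t - s) * ∏ j ∈ Finset.Ico (s + 1) (t + 1), f j) +
        c * R * ρ ^ t := by
    intro t
    induction t with
    | zero =>
      have h0 := hrec 0
      have hfq : f 0 * q = q + c := by
        simp only [hfdef, pow_zero]
        field_simp
      simp only [zero_add, Finset.range_zero, Finset.sum_empty, mul_zero, add_zero,
        Finset.prod_range_one, pow_one, pow_zero, mul_one] at h0 ⊢
      nlinarith [norm_nonneg (w 0 - wstar), hfq]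
    | succ t ih =>
      have hfq : q + c * ρ ^ (t + 1) = q * f (t + 1) := by
        simp only [hfdef]
        field_simp
      have hrec' := hrec (t + 1)
      rw [hfq] at hrec'
      have hqf : (0 : ℝ) ≤ q * f (t + 1) := le_of_lt (mul_pos h1 (hfpos _))
      have hsum : ∑ s ∈ Finset.range (t + 1),
            ρ ^ s * q ^ (t + 1 - s) * ∏ j ∈ Finset.Ico (s + 1) (t + 1 + 1), f j
          = q * f (t + 1) * (∑ s ∈ Finset.range t,
              ρ ^ s * q ^ (t - s) * ∏ j ∈ Finset.Ico (s + 1) (t + 1), f j)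
            + ρ ^ t * (q * f (t + 1)) := by
        rw [Finset.sum_range_succ, Finset.mul_sum]
        congr 1
        · apply Finset.sum_congr rfl
          intro s hs
          have hs' : s < t := Finset.mem_range.mp hs
          rw [Finset.prod_Ico_succ_top (by omega),
            show t + 1 - s = (t - s) + 1 from by omega, pow_succ]
          ring
        · rw [show t + 1 - t = 1 from by omega, Nat.Ico_succ_singleton,
            Finset.prod_singleton, pow_one]
          ring
      calc ‖w (t + 1 + 1) - wstar‖
          ≤ q * f (t + 1) * ‖w (t + 1) - wstar‖ + c * R * ρ ^ (t + 1) := hrec'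
        _ ≤ q * f (t + 1) *
              ((∏ j ∈ Finset.range (t + 1), f j) * q ^ (t + 1) * ‖w 0 - wstar‖ +
                c * R * (∑ s ∈ Finset.range t,
                  ρ ^ s * q ^ (t - s) * ∏ j ∈ Finset.Ico (s + 1) (t + 1), f j) +
                c * R * ρ ^ t) + c * R * ρ ^ (t + 1) := by
            gcongr
        _ = (∏ j ∈ Finset.range (t + 1 + 1), f j) * q ^ (t + 1 + 1) * ‖w 0 - wstar‖ +
              c * R * (∑ s ∈ Finset.range (t + 1),
                ρ ^ s * q ^ (t + 1 - s) * ∏ j ∈ Finset.Ico (s + 1) (t + 1 + 1), f j) +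
              c * R * ρ ^ (t + 1) := by
            rw [Finset.prod_range_succ f (t + 1), hsum]
            ring
  intro t
  have hgeom : ∑ s ∈ Finset.range t, ρ ^ s * q ^ (t - s)
      = q * ((q ^ t - ρ ^ t) / (q - ρ)) := by
    have hg := geom_sum₂_mul ρ q t
    have h2' : ∑ s ∈ Finset.range t, ρ ^ s * q ^ (t - s)
        = q * ∑ s ∈ Finset.range t, ρ ^ s * q ^ (t - 1 - s) := by
      rw [Finset.mul_sum]
      apply Finset.sum_congr rfl
      intro s hs
      have hs' : s < t := Finset.mem_range.mp hs
      rw [show t - s = (t - 1 - s) + 1 from by omega, pow_succ]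
      ring
    rw [h2']
    field_simp
    linear_combination (-1 : ℝ) * hg
  have hmid : ∑ s ∈ Finset.range t,
      ρ ^ s * q ^ (t - s) * ∏ j ∈ Finset.Ico (s + 1) (t + 1), f j
      ≤ V * (q * ((q ^ t - ρ ^ t) / (q - ρ))) := by
    calc ∑ s ∈ Finset.range t,
          ρ ^ s * q ^ (t - s) * ∏ j ∈ Finset.Ico (s + 1) (t + 1), f j
        ≤ ∑ s ∈ Finset.range t, ρ ^ s * q ^ (t - s) * V := by
          apply Finset.sum_le_sum
          intro s _
          exact mul_le_mul_of_nonneg_left (hVf _) (by positivity)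
      _ = (∑ s ∈ Finset.range t, ρ ^ s * q ^ (t - s)) * V := by
          rw [Finset.sum_mul]
      _ = V * (q * ((q ^ t - ρ ^ t) / (q - ρ))) := by rw [hgeom]; ring
  calc ‖w (t + 1) - wstar‖
      ≤ (∏ j ∈ Finset.range (t + 1), f j) * q ^ (t + 1) * ‖w 0 - wstar‖ +
        c * R * (∑ s ∈ Finset.range t,
          ρ ^ s * q ^ (t - s) * ∏ j ∈ Finset.Ico (s + 1) (t + 1), f j) +
        c * R * ρ ^ t := key t
    _ ≤ V * q ^ (t + 1) * ‖w 0 - wstar‖ +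
        c * R * (V * (q * ((q ^ t - ρ ^ t) / (q - ρ)))) +
        c * R * ρ ^ t := by
          gcongr
          · exact hVf _
    _ = V * q ^ (t + 1) * ‖w 0 - wstar‖ +
        (c * R * V * q / (q - ρ)) * (q ^ t - ρ ^ t) +
        c * R * ρ ^ t := by
          field_simp
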